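/- Let m ≥ 3 be odd and q = 2^m. Then gcd(e(e-1), q-1) = 1 for e = 2^h + 1 whenever gcd(h, m) = 1. -/

import Mathlib

lemma dvd_pow_gcd_sub_one {d a b : ℕ} (ha : d ∣ 2 ^ a - 1) (hb : d ∣ 2 ^ b - 1) :
    d ∣ 2 ^ Nat.gcd a b - 1 := by
  rcases eq_or_ne d 0 with rfl | hd
  · have ha' : 2 ^ a - 1 = 0 := Nat.eq_zero_of_zero_dvd ha
    have hb' : 2 ^ b - 1 = 0 := Nat.eq_zero_of_zero_dvd hb
    have : a = 0 := by
      by_contra h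
      have := Nat.one_lt_two_pow_iff.mpr h
      omega
    have : b = 0 := by
      by_contra h'
      have := Nat.one_lt_two_pow_iff.mpr h'
      omega
    simp_all
  · haveI : NeZero d := ⟨hd⟩
    have toZMod : ∀ k : ℕ, d ∣ 2 ^ k - 1 → (2 : ZMod d) ^ k = 1 := by
      intro k hk
      have h1 : (1 : ℕ) ≤ 2 ^ k := Nat.one_le_two_pow
      have : (1 : ℕ) ≡ 2 ^ k [MOD d] := (Nat.modEq_iff_dvd' h1).mpr hk
      have := (ZMod.natCast_eq_natCast_iff _ _ _).mpr this
      push_cast at this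
      exact this.symm
    have hga : (2 : ZMod d) ^ Nat.gcd a b = 1 := pow_gcd_eq_one.mpr ⟨toZMod a ha, toZMod b hb⟩
    have : (1 : ℕ) ≡ 2 ^ Nat.gcd a b [MOD d] := by
      apply (ZMod.natCast_eq_natCast_iff _ _ _).mp
      push_cast
      exact hga.symm
    exact (Nat.modEq_iff_dvd' Nat.one_le_two_pow).mp this

theorem stmt_3 (m h : ℕ) (hm : 3 ≤ m) (hmo : Odd m) (hpos : 0 < h)
    (hh : Nat.gcd h m = 1) :
    Nat.gcd ((2 ^ h + 1) * ((2 ^ h + 1) - 1)) (2 ^ m - 1) = 1 := by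
  have h2h : (2 : ℕ) ^ h + 1 - 1 = 2 ^ h := by simp
  rw [h2h]
  have hodd : Odd (2 ^ m - 1) := by
    have h1 : 2 ≤ 2 ^ m := Nat.one_lt_two_pow_iff.mpr (by omega)
    have h2 : (2 : ℕ) ∣ 2 ^ m := dvd_pow_self 2 (by omega)
    rcases h2 with ⟨c, hc⟩
    exact ⟨c - 1, by omega⟩
  have c1 : Nat.Coprime (2 ^ h) (2 ^ m - 1) :=
    Nat.Coprime.pow_left _ (by
      exact hodd.coprime_two_left)
  have c2 : Nat.Coprime (2 ^ h + 1) (2 ^ m - 1) := by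
    have hdvd1 : (2 ^ h + 1) ∣ 2 ^ (2 * h) - 1 := by
      have : 2 ^ (2 * h) - 1 = (2 ^ h + 1) * (2 ^ h - 1) := by
        have e1 : 2 ^ (2 * h) = 2 ^ h * 2 ^ h := by rw [two_mul, pow_add]
        have e2 : 1 ≤ 2 ^ h := Nat.one_le_two_pow
        rw [e1]
        have e3 : 1 ≤ 2 ^ h * 2 ^ h := Nat.one_le_iff_ne_zero.mpr (by positivity)
        zify [e2, e3]; ring
      rw [this]; exact Dvd.intro _ rfl
    have hd := dvd_pow_gcd_sub_one
      ((Nat.gcd_dvd_left (2 ^ h + 1) (2 ^ m - 1)).trans hdvd1)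
      (Nat.gcd_dvd_right (2 ^ h + 1) (2 ^ m - 1))
    have hg : Nat.gcd (2 * h) m = 1 := by
      have : Nat.Coprime 2 m := by
        exact hmo.coprime_two_left
      exact Nat.Coprime.mul this hh
    rw [hg] at hd
    simpa [Nat.Coprime] using Nat.le_antisymm (Nat.le_of_dvd one_pos hd)
      (Nat.one_le_iff_ne_zero.mpr (Nat.gcd_ne_zero_right (by
        have : 2 ≤ 2 ^ m := Nat.one_lt_two_pow_iff.mpr (by omega); omega)))
  exact (Nat.Coprime.mul c2 c1)
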